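/- A root of unity ζ ∈ ℚ̄^× of exact order n is almost rational over ℚ (for the multiplicative group 𝔾_m/ℚ, i.e. for all σ, τ ∈ Gal(ℚ̄/ℚ), σ(ζ)·τ(ζ) = ζ² implies ζ = σ(ζ) = τ(ζ)) if and only if n divides 6. More generally, if K is a field such that the restriction map gives an isomorphism Gal(K(ζ_n)/K) ≅ Gal(ℚ(ζ_n)/ℚ), then the almost rational torsion points of μ_n over K are exactly the n-th roots of unity of order dividing 6. -/

import Mathlib

open Polynomial

/-- Units summing to 2 from a suitable `k`. -/
lemma keyC {m : ℕ} (hm : 1 < m) (k : ℕ) (h1 : Nat.Coprime (1 + k) m)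
    (h2 : Nat.Coprime (1 + k * (m - 1)) m) (h3 : ¬ m ∣ k) :
    ∃ a b : (ZMod m)ˣ, (a : ZMod m) + (b : ZMod m) = 2 ∧ (a : ZMod m) ≠ 1 := by
  refine ⟨ZMod.unitOfCoprime _ h1, ZMod.unitOfCoprime _ h2, ?_, ?_⟩
  · rw [ZMod.coe_unitOfCoprime, ZMod.coe_unitOfCoprime]
    have : ((1 + k : ℕ) : ZMod m) + ((1 + k * (m - 1) : ℕ) : ZMod m)
        = ((2 + k * m : ℕ) : ZMod m) := by
      push_cast [Nat.cast_sub (by omega : 1 ≤ m)]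
      ring
    rw [this]
    push_cast
    rw [ZMod.natCast_self]
    ring
  · rw [ZMod.coe_unitOfCoprime]
    intro h
    apply h3
    have : ((1 + k : ℕ) : ZMod m) = ((1 : ℕ) : ZMod m) := by
      push_cast at h ⊢; linear_combination h
    rw [ZMod.natCast_eq_natCast_iff] at this
    have := (Nat.modEq_iff_dvd' (by omega)).1 this.symm
    simpa using this

/-- If `m > 0` does not divide `6` then there are units `a b` mod `m` with `a+b=2`, `a ≠ 1`. -/
lemma keyA {m : ℕ} (hm : 0 < m) (h6 : ¬ m ∣ 6) :
    ∃ a b : (ZMod m)ˣ, (a : ZMod m) + (b : ZMod m) = 2 ∧ (a : ZMod m) ≠ 1 := by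
  have hm1 : 1 < m := by
    rcases Nat.lt_or_ge m 2 with h | h
    · interval_cases m <;> simp_all
    · omega
  set r := ∏ p ∈ m.primeFactors, p with hr
  have hrdvd : r ∣ m := Nat.prod_primeFactors_dvd m
  by_cases hmr : m ∣ r
  · -- `m` is the product of its prime factors; there is a prime `p > 3` dividing `m`
    have hrm : r = m := Nat.dvd_antisymm hrdvd hmr
    have hp : ∃ p : ℕ, p.Prime ∧ p ∈ m.primeFactors ∧ 3 < p := by
      by_contra hcon
      push_neg at hcon
      apply h6
      have hsub : m.primeFactors ⊆ ({2, 3} : Finset ℕ) := by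
        intro q hq
        have hq' := Nat.mem_primeFactors.1 hq
        have h3 := hcon q hq'.1 hq
        have h2 := hq'.1.two_le
        interval_cases q <;> decide
      calc m = r := hrm.symm
        _ ∣ ∏ p ∈ ({2, 3} : Finset ℕ), p := Finset.prod_dvd_prod_of_subset _ _ _ hsub
        _ = 6 := by decide
    obtain ⟨p, hp, hpmem, hp3⟩ := hp
    set s := ∏ q ∈ m.primeFactors.erase p, q with hsdef
    have hs : p * s = m := by
      have := Finset.mul_prod_erase m.primeFactors (fun q => q) hpmem
      simpa only [← hr, hrm, hsdef] using this
    have hcop : Nat.Coprime p s := by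
      apply Nat.Coprime.prod_right
      intro q hq
      have hq' := Nat.mem_primeFactors.1 (Finset.mem_of_mem_erase hq)
      exact (Nat.coprime_primes hp hq'.1).2 (Finset.ne_of_mem_erase hq).symm
    obtain ⟨k, hk2, hk0⟩ := Nat.chineseRemainder hcop 2 0
    have hsk : s ∣ k := Nat.dvd_of_mod_eq_zero (by simpa [Nat.ModEq] using hk0)
    have hkp : (k : ZMod p) = 2 := by
      have := (ZMod.natCast_eq_natCast_iff _ _ _).2 hk2
      simpa using this
    have hpm : p ∣ m := ⟨s, hs.symm⟩
    have hmp : (m : ZMod p) = 0 := (ZMod.natCast_eq_zero_iff _ _).2 hpm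
    have hpdvd1 : ¬ (p ∣ 1) := fun h => hp.one_lt.ne' (Nat.eq_one_of_dvd_one h)
    have key : ∀ c : ℕ, ((1 + k * c : ℕ) : ZMod p) ≠ 0 → Nat.Coprime (1 + k * c) m := by
      intro c hc
      rw [Nat.coprime_iff_gcd_eq_one]
      by_contra hg
      obtain ⟨q, hq, hqd⟩ := Nat.exists_prime_and_dvd hg
      have hq1 : q ∣ 1 + k * c := hqd.trans (Nat.gcd_dvd_left _ _)
      have hqm : q ∣ m := hqd.trans (Nat.gcd_dvd_right _ _)
      rw [← hs] at hqm
      rcases (Nat.Prime.dvd_mul hq).1 hqm with hqp | hqs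
      · have : q = p := (Nat.prime_dvd_prime_iff_eq hq hp).1 hqp
        subst this
        exact hc ((ZMod.natCast_eq_zero_iff _ _).2 hq1)
      · have hqk : q ∣ k := hqs.trans hsk
        have : q ∣ 1 := (Nat.dvd_add_right (hqk.mul_right c)).1
          (by rwa [Nat.add_comm] at hq1)
        exact hq.one_lt.ne' (Nat.eq_one_of_dvd_one this)
    have hc1 : ((1 + k * 1 : ℕ) : ZMod p) ≠ 0 := by
      rw [Nat.cast_add, Nat.cast_mul, hkp]
      push_cast
      intro h
      have h3 : ((3 : ℕ) : ZMod p) = 0 := by push_cast; linear_combination h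
      rw [ZMod.natCast_eq_zero_iff] at h3
      rcases (Nat.Prime.eq_one_or_self_of_dvd (by norm_num : Nat.Prime 3) p h3) with h | h <;>
        omega
    have hc2 : ((1 + k * (m - 1) : ℕ) : ZMod p) ≠ 0 := by
      rw [Nat.cast_add, Nat.cast_mul, hkp, Nat.cast_sub (by omega : 1 ≤ m), hmp]
      intro h
      have h1 : ((1 : ℕ) : ZMod p) = 0 := by push_cast at h ⊢; linear_combination -h
      rw [ZMod.natCast_eq_zero_iff] at h1
      exact hpdvd1 h1
    have hnd : ¬ m ∣ k := by
      intro hmk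
      have hpk : p ∣ k := dvd_trans hpm hmk
      have h0 : (k : ZMod p) = 0 := (ZMod.natCast_eq_zero_iff _ _).2 hpk
      rw [h0] at hkp
      have : ((2 : ℕ) : ZMod p) = 0 := by push_cast; linear_combination -hkp
      rw [ZMod.natCast_eq_zero_iff] at this
      have := Nat.le_of_dvd (by norm_num) this
      omega
    exact keyC hm1 k (by simpa using key 1 hc1) (key (m - 1) hc2) hnd
  · -- radical case
    have key : ∀ c : ℕ, Nat.Coprime (1 + r * c) m := by
      intro c
      rw [Nat.coprime_iff_gcd_eq_one]
      by_contra hg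
      obtain ⟨q, hq, hqd⟩ := Nat.exists_prime_and_dvd hg
      have hq1 : q ∣ 1 + r * c := hqd.trans (Nat.gcd_dvd_left _ _)
      have hqm : q ∣ m := hqd.trans (Nat.gcd_dvd_right _ _)
      have hqr : q ∣ r := Finset.dvd_prod_of_mem _ (Nat.mem_primeFactors.2 ⟨hq, hqm, hm.ne'⟩)
      have : q ∣ 1 := (Nat.dvd_add_right (hqr.mul_right c)).1 (by rwa [Nat.add_comm] at hq1)
      exact hq.one_lt.ne' (Nat.eq_one_of_dvd_one this)
    exact keyC hm1 r (by simpa using key 1) (key (m - 1)) hmr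

/-- If `m ∣ 6` then units summing to `2` must both be `1`. -/
lemma keyB {m : ℕ} (h6 : m ∣ 6) :
    ∀ a b : (ZMod m)ˣ, (a : ZMod m) + (b : ZMod m) = 2 →
      (a : ZMod m) = 1 ∧ (b : ZMod m) = 1 := by
  have : m ∈ Nat.divisors 6 := Nat.mem_divisors.2 ⟨h6, by norm_num⟩
  fin_cases this <;> decide


/-- General criterion. -/
lemma keyGen (K : Type) [Field K] (n : ℕ) (hn : 0 < n)
    (ξ : AlgebraicClosure K) (hξ : orderOf ξ = n)
    (H : ∀ a : ℕ, a.Coprime n →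
      ∃ σ : AlgebraicClosure K ≃ₐ[K] AlgebraicClosure K, σ ξ = ξ ^ a)
    (ζ : AlgebraicClosure K) (hζ : ζ ^ n = 1) :
    (∀ σ τ : AlgebraicClosure K ≃ₐ[K] AlgebraicClosure K,
        σ ζ * τ ζ = ζ ^ 2 → ζ = σ ζ ∧ ζ = τ ζ) ↔ orderOf ζ ∣ 6 := by
  set m := orderOf ζ with hmdef
  have hmn : m ∣ n := orderOf_dvd_of_pow_eq_one hζ
  have hm0 : m ≠ 0 := by
    intro h
    rw [h] at hmn
    exact hn.ne' (Nat.eq_zero_of_zero_dvd hmn)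
  haveI : NeZero m := ⟨hm0⟩
  haveI : NeZero n := ⟨hn.ne'⟩
  have hprimζ : IsPrimitiveRoot ζ m := IsPrimitiveRoot.orderOf ζ
  have hcanc : ∀ x y : ℕ, ζ ^ x = ζ ^ y ↔ x ≡ y [MOD m] := by
    have hu : IsUnit ζ := IsUnit.of_pow_eq_one hζ hn.ne'
    obtain ⟨u, rfl⟩ := hu
    intro x y
    rw [hmdef, orderOf_units, ← Units.val_pow_eq_pow_val, ← Units.val_pow_eq_pow_val,
      ← pow_eq_pow_iff_modEq]
    exact Units.val_inj
  have hprimξ : IsPrimitiveRoot ξ n := hξ ▸ IsPrimitiveRoot.orderOf ξ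
  constructor
  · -- almost rational → m ∣ 6
    intro halm
    by_contra h6
    obtain ⟨a, b, hab, ha1⟩ := keyA (Nat.pos_of_ne_zero hm0) h6
    obtain ⟨A, hA⟩ := ZMod.unitsMap_surjective hmn a
    obtain ⟨B, hB⟩ := ZMod.unitsMap_surjective hmn b
    obtain ⟨σ, hσ⟩ := H (A : ZMod n).val (ZMod.val_coe_unit_coprime A)
    obtain ⟨τ, hτ⟩ := H (B : ZMod n).val (ZMod.val_coe_unit_coprime B)
    obtain ⟨k, -, hk⟩ := hprimξ.eq_pow_of_pow_eq_one hζ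
    set a' := (A : ZMod n).val with ha'
    set b' := (B : ZMod n).val with hb'
    have hcast : ∀ U : (ZMod n)ˣ,
        (((U : ZMod n).val : ℕ) : ZMod m) = ((ZMod.unitsMap hmn U : (ZMod m)ˣ) : ZMod m) := by
      intro U
      have h1 : ((ZMod.unitsMap hmn U : (ZMod m)ˣ) : ZMod m)
          = ZMod.castHom hmn (ZMod m) (U : ZMod n) := rfl
      rw [h1, ZMod.castHom_apply, ZMod.natCast_val]
    have ham : ((a' : ℕ) : ZMod m) = (a : ZMod m) := by rw [ha', hcast A, hA]
    have hbm : ((b' : ℕ) : ZMod m) = (b : ZMod m) := by rw [hb', hcast B, hB]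
    have hσζ : σ ζ = ζ ^ a' := by
      rw [← hk, map_pow, hσ, ← pow_mul, mul_comm, pow_mul]
    have hτζ : τ ζ = ζ ^ b' := by
      rw [← hk, map_pow, hτ, ← pow_mul, mul_comm, pow_mul]
    have hmul : σ ζ * τ ζ = ζ ^ 2 := by
      rw [hσζ, hτζ, ← pow_add]
      rw [hcanc, ← ZMod.natCast_eq_natCast_iff]
      push_cast
      rw [ham, hbm, hab]
    obtain ⟨h1, -⟩ := halm σ τ hmul
    apply ha1
    have h2 : ζ ^ a' = ζ ^ 1 := by rw [pow_one, ← h1.trans hσζ]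
    have h3 := (hcanc _ _).1 h2
    have h4 := (ZMod.natCast_eq_natCast_iff _ _ _).2 h3
    rw [ham] at h4
    simpa using h4
  · -- m ∣ 6 → almost rational
    intro h6 σ τ hστ
    have horder : ∀ σ : AlgebraicClosure K ≃ₐ[K] AlgebraicClosure K,
        ∃ i : ℕ, i.Coprime m ∧ σ ζ = ζ ^ i := by
      intro σ
      have h1 : (σ ζ) ^ m = 1 := by
        rw [← map_pow, hmdef, pow_orderOf_eq_one, map_one]
      obtain ⟨i, -, hi⟩ := hprimζ.eq_pow_of_pow_eq_one h1
      refine ⟨i, ?_, hi.symm⟩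
      have ho : orderOf (σ ζ) = m := by
        rw [hmdef]
        exact orderOf_injective (σ : AlgebraicClosure K →+* AlgebraicClosure K).toMonoidHom
          σ.injective ζ
      rcases Nat.eq_zero_or_pos i with h0 | hipos
      · subst h0
        simp only [pow_zero] at hi
        rw [← hi, orderOf_one] at ho
        simp [Nat.coprime_zero_left, ← ho]
      · rw [← hi, orderOf_pow' _ hipos.ne', ← hmdef] at ho
        rcases Nat.div_eq_self.1 ho with h | h
        · exact absurd h hm0
        · exact Nat.coprime_comm.1 h
    obtain ⟨i, hic, hi⟩ := horder σ
    obtain ⟨j, hjc, hj⟩ := horder τ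
    have hsum : (i + j : ℕ) ≡ 2 [MOD m] := by
      rw [hi, hj, ← pow_add] at hστ
      exact (hcanc _ _).1 hστ
    have hab2 : ((ZMod.unitOfCoprime i hic : ZMod m)) + (ZMod.unitOfCoprime j hjc : ZMod m)
        = 2 := by
      rw [ZMod.coe_unitOfCoprime, ZMod.coe_unitOfCoprime]
      have := (ZMod.natCast_eq_natCast_iff _ _ _).2 hsum
      push_cast at this
      simpa using this
    obtain ⟨hA1, hB1⟩ := keyB h6 _ _ hab2
    rw [ZMod.coe_unitOfCoprime] at hA1 hB1
    constructor
    · have hmod : i ≡ 1 [MOD m] := by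
        rw [← Nat.cast_one] at hA1
        exact (ZMod.natCast_eq_natCast_iff _ _ _).1 hA1
      have : ζ ^ i = ζ ^ 1 := (hcanc _ _).2 hmod
      rw [hi, this, pow_one]
    · have hmod : j ≡ 1 [MOD m] := by
        rw [← Nat.cast_one] at hB1
        exact (ZMod.natCast_eq_natCast_iff _ _ _).1 hB1
      have : ζ ^ j = ζ ^ 1 := (hcanc _ _).2 hmod
      rw [hj, this, pow_one]

lemma keyQ (n : ℕ) (hn : 0 < n) (ζ : AlgebraicClosure ℚ) (hord : orderOf ζ = n) :
    ∀ a : ℕ, a.Coprime n →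
      ∃ σ : AlgebraicClosure ℚ ≃ₐ[ℚ] AlgebraicClosure ℚ, σ ζ = ζ ^ a := by
  intro a ha
  have hprim : IsPrimitiveRoot ζ n := hord ▸ IsPrimitiveRoot.orderOf ζ
  have hprim' : IsPrimitiveRoot (ζ ^ a) n := hprim.pow_of_coprime a ha
  have hmin : cyclotomic n ℚ = minpoly ℚ ζ := cyclotomic_eq_minpoly_rat hprim hn
  have hev : (Polynomial.aeval (ζ ^ a)) (minpoly ℚ ζ) = 0 := by
    rw [← hmin, aeval_def, ← Polynomial.eval_map, map_cyclotomic]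
    exact hprim'.isRoot_cyclotomic hn
  have halg : IsAlgebraic ℚ ζ := (AlgebraicClosure.isAlgebraic ℚ).isAlgebraic ζ
  haveI : Normal ℚ (AlgebraicClosure ℚ) :=
    @IsAlgClosure.normal ℚ (AlgebraicClosure ℚ) _ _ (AlgebraicClosure.instAlgebra ℚ) inferInstance
  exact minpoly.exists_algEquiv_of_root' halg hev



/-!
Almost rational torsion points on `𝔾ₘ`. A root of unity `ζ ∈ K̄ˣ` is almost rational over
`K` if for all `σ, τ ∈ Gal(K̄/K)`, the equality `σ(ζ) · τ(ζ) = ζ²` implies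
`ζ = σ(ζ) = τ(ζ)`. The hypothesis that restriction gives an isomorphism
`Gal(K(ζₙ)/K) ≅ Gal(ℚ(ζₙ)/ℚ)` is expressed by saying that for a primitive `n`-th root of
unity `ξ ∈ K̄` and every `a` coprime to `n` there is `σ ∈ Gal(K̄/K)` with `σ ξ = ξ ^ a`
(i.e. the cyclotomic character `Gal(K(ζₙ)/K) → (ℤ/nℤ)ˣ ≅ Gal(ℚ(ζₙ)/ℚ)` is surjective,
hence bijective).
-/

theorem almostRational_root_of_unity_iff_order_dvd_six :
    -- Over `ℚ`: a root of unity `ζ ∈ ℚ̄` of exact order `n` is almost rational over `ℚ`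
    -- if and only if `n ∣ 6`.
    (∀ (n : ℕ), 0 < n → ∀ ζ : AlgebraicClosure ℚ, orderOf ζ = n →
      ((∀ σ τ : AlgebraicClosure ℚ ≃ₐ[ℚ] AlgebraicClosure ℚ,
          σ ζ * τ ζ = ζ ^ 2 → ζ = σ ζ ∧ ζ = τ ζ) ↔ n ∣ 6)) ∧
    -- More generally, over a field `K` with `Gal(K(ζₙ)/K) ≅ Gal(ℚ(ζₙ)/ℚ)`:
    -- the almost rational torsion points of `μₙ` are exactly the `n`-th roots of unity of
    -- order dividing `6`.
    (∀ (K : Type) (_ : Field K), ∀ (n : ℕ), 0 < n →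
      ∀ ξ : AlgebraicClosure K, orderOf ξ = n →
      (∀ a : ℕ, a.Coprime n →
        ∃ σ : AlgebraicClosure K ≃ₐ[K] AlgebraicClosure K, σ ξ = ξ ^ a) →
      ∀ ζ : AlgebraicClosure K, ζ ^ n = 1 →
      ((∀ σ τ : AlgebraicClosure K ≃ₐ[K] AlgebraicClosure K,
          σ ζ * τ ζ = ζ ^ 2 → ζ = σ ζ ∧ ζ = τ ζ) ↔ orderOf ζ ∣ 6)) := by
  constructor
  · intro n hn ζ hord
    have h := keyGen ℚ n hn ζ hord (keyQ n hn ζ hord) ζ (hord ▸ pow_orderOf_eq_one ζ)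
    rwa [hord] at h
  · intro K _ n hn ξ hξ H ζ hζ
    exact keyGen K n hn ξ hξ H ζ hζ
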